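/- Let α ∈ (0,2] and for integers k ≥ 1 write F_k(t) = F(-α/2, k-α/2; k+1; t) for t ∈ [0,1). Then F_k(t)/F_1(t) ≤ 1 for all k ≥ 1 and t ∈ [0,1). -/

import Mathlib

set_option maxHeartbeats 800000
open Polynomial

noncomputable def gaussHF (a b c x : ℝ) : ℝ :=
  ∑' n : ℕ, ((ascPochhammer ℝ n).eval a * (ascPochhammer ℝ n).eval b /
    ((ascPochhammer ℝ n).eval c * n.factorial)) * x ^ n

namespace StmtNine

noncomputable def P (n : ℕ) (x : ℝ) : ℝ := (ascPochhammer ℝ n).eval x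

lemma P_zero (x : ℝ) : P 0 x = 1 := by simp [P]

lemma P_succ_right (n : ℕ) (x : ℝ) : P (n+1) x = P n x * (x + n) := by
  unfold P; rw [ascPochhammer_succ_right]; simp [eval_mul]

lemma P_succ_left (n : ℕ) (x : ℝ) : P (n+1) x = x * P n (x+1) := by
  unfold P; rw [ascPochhammer_succ_left]; simp [eval_comp]

lemma P_nonneg {x : ℝ} (hx : 0 ≤ x) (n : ℕ) : 0 ≤ P n x := by
  induction n with
  | zero => simp [P_zero]
  | succ n ih => rw [P_succ_right]; positivity

lemma P_pos {x : ℝ} (hx : 0 < x) (n : ℕ) : 0 < P n x := by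
  induction n with
  | zero => simp [P_zero]
  | succ n ih => rw [P_succ_right]; positivity

lemma P_mono {x y : ℝ} (hx : 0 ≤ x) (hxy : x ≤ y) (n : ℕ) : P n x ≤ P n y := by
  induction n with
  | zero => simp [P_zero]
  | succ n ih =>
      rw [P_succ_right, P_succ_right]
      have := P_nonneg hx n
      have := P_nonneg (hx.trans hxy) n
      apply mul_le_mul ih (by linarith) (by positivity) (by positivity)

lemma P_one (n : ℕ) : P n 1 = n.factorial := by
  induction n with
  | zero => simp [P_zero]
  | succ n ih =>
      rw [P_succ_right, ih, Nat.factorial_succ]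
      push_cast; ring

lemma P_two (n : ℕ) : P n 2 = (n+1).factorial := by
  induction n with
  | zero => simp [P_zero]
  | succ n ih =>
      rw [P_succ_right, ih]
      have h : ((n+1)+1).factorial = ((n+1)+1) * (n+1).factorial := Nat.factorial_succ (n+1)
      rw [h]; push_cast; ring

/-- key ratio inequality -/
lemma key (a x : ℝ) (ha : 0 ≤ a) (ha1 : a ≤ 1) (hx : 1 ≤ x) (n : ℕ) :
    P n (1-a) * P n (x+1) ≤ P n (x-a) * P n 2 := by
  induction n with
  | zero => simp [P_zero]
  | succ n ih =>
      rw [P_succ_right, P_succ_right, P_succ_right, P_succ_right]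
      have h1 : 0 ≤ P n (1-a) := P_nonneg (by linarith) n
      have h2 : 0 ≤ P n (x+1) := P_nonneg (by linarith) n
      have hfac : (1-a+n) * (x+1+n) ≤ (x-a+n) * (2+n) := by nlinarith
      calc P n (1-a) * (1-a+n) * (P n (x+1) * (x+1+n))
          = (P n (1-a) * P n (x+1)) * ((1-a+n) * (x+1+n)) := by ring
        _ ≤ (P n (x-a) * P n 2) * ((x-a+n) * (2+n)) := by
            apply mul_le_mul ih hfac (by nlinarith) ?_
            have := P_nonneg (by linarith : (0:ℝ) ≤ x - a) n
            have := P_nonneg (by norm_num : (0:ℝ) ≤ 2) n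
            positivity
        _ = P n (x-a) * (x-a+n) * (P n 2 * (2+n)) := by ring

lemma P_neg_eval (a : ℝ) (n : ℕ) : P (n+1) (-a) = -a * P n (1-a) := by
  rw [P_succ_left]; ring_nf

/-- the coefficient -/
noncomputable def c (x a : ℝ) (n : ℕ) : ℝ := P n (-a) * P n (x - a) / (P n (x + 1) * n.factorial)

lemma c_zero (x a : ℝ) : c x a 0 = 1 := by simp [c, P_zero]

lemma abs_P_neg_le (a : ℝ) (ha : 0 ≤ a) (ha1 : a ≤ 1) (n : ℕ) : |P n (-a)| ≤ n.factorial := by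
  cases n with
  | zero => simp [P_zero]
  | succ n =>
      rw [P_neg_eval, abs_mul, abs_neg, abs_of_nonneg ha,
        abs_of_nonneg (P_nonneg (by linarith) n)]
      calc a * P n (1-a) ≤ 1 * P n 1 := by
            apply mul_le_mul ha1 (P_mono (by linarith) (by linarith) n)
              (P_nonneg (by linarith) n) zero_le_one
        _ = n.factorial := by rw [one_mul, P_one]
        _ ≤ (n+1).factorial := by exact_mod_cast Nat.factorial_le (Nat.le_succ n)

lemma abs_c_le_one (x a : ℝ) (ha : 0 ≤ a) (ha1 : a ≤ 1) (hx : 1 ≤ x) (n : ℕ) :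
    |c x a n| ≤ 1 := by
  have hP1 : 0 < P n (x+1) := P_pos (by linarith) n
  have hfac : (0:ℝ) < n.factorial := by exact_mod_cast n.factorial_pos
  have hxa : 0 ≤ P n (x - a) := P_nonneg (by linarith) n
  rw [c, abs_div, abs_mul, abs_of_nonneg hxa, abs_of_pos (by positivity : (0:ℝ) < P n (x+1) * n.factorial),
    div_le_one (by positivity)]
  calc |P n (-a)| * P n (x-a) ≤ (n.factorial : ℝ) * P n (x+1) := by
        apply mul_le_mul (abs_P_neg_le a ha ha1 n) (P_mono (by linarith) (by linarith) n) hxa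
          (by positivity)
    _ = P n (x+1) * n.factorial := by ring

lemma c_le (x a : ℝ) (ha : 0 < a) (ha1 : a ≤ 1) (hx : 1 ≤ x) (n : ℕ) :
    c x a n ≤ c 1 a n := by
  cases n with
  | zero => simp [c_zero]
  | succ n =>
      rw [c, c, P_neg_eval]
      have hE : 0 ≤ P n (1 - a) := P_nonneg (by linarith) n
      have hP1 : 0 < P (n+1) (x+1) := P_pos (by linarith) (n+1)
      have hP2 : 0 < P (n+1) (1+1) := P_pos (by norm_num) (n+1)
      have hfac : (0:ℝ) < (n+1).factorial := by exact_mod_cast (n+1).factorial_pos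
      rw [div_le_div_iff₀ (by positivity) (by positivity)]
      have hk := key a x ha.le ha1 hx (n+1)
      have h2 : P (n+1) (1+1) = P (n+1) 2 := by norm_num
      have hxa : 0 ≤ P (n+1) (x - a) := P_nonneg (by linarith) (n+1)
      have h1a : 0 ≤ P (n+1) (1 - a) := P_nonneg (by linarith) (n+1)
      rw [h2]
      nlinarith [mul_le_mul_of_nonneg_left hk (mul_nonneg (mul_nonneg ha.le hE) hfac.le)]

/-- terms of the series -/
lemma summable_terms (x a t : ℝ) (ha : 0 ≤ a) (ha1 : a ≤ 1) (hx : 1 ≤ x)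
    (ht0 : 0 ≤ t) (ht1 : t < 1) : Summable (fun n => c x a n * t ^ n) := by
  apply Summable.of_abs
  apply Summable.of_nonneg_of_le (fun n => abs_nonneg _) (fun n => ?_)
    (summable_geometric_of_lt_one ht0 ht1)
  rw [abs_mul, abs_pow, abs_of_nonneg ht0]
  calc |c x a n| * t ^ n ≤ 1 * t ^ n := by
        apply mul_le_mul_of_nonneg_right (abs_c_le_one x a ha ha1 hx n) (by positivity)
    _ = t ^ n := one_mul _

lemma gaussHF_eq (x a t : ℝ) : gaussHF (-a) (x - a) (x + 1) t = ∑' n, c x a n * t ^ n := rfl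

/-- coefficient bound for F₁ -/
lemma abs_c_one_le (a : ℝ) (ha : 0 ≤ a) (ha1 : a ≤ 1) (n : ℕ) :
    |c 1 a (n+1)| ≤ a * (1-a) / ((n+1) * (n+2)) := by
  have h2 : P (n+1) (1+1) = ((n+2).factorial : ℝ) := by
    rw [show (1:ℝ)+1 = 2 by norm_num, P_two]
  rw [c, P_neg_eval, h2]
  have h1a : P (n+1) (1 - a) = (1-a) * P n (2-a) := by
    rw [P_succ_left]; ring_nf
  rw [h1a, abs_div, abs_mul, abs_mul, abs_mul, abs_neg, abs_of_nonneg ha,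
    abs_of_nonneg (by linarith : (0:ℝ) ≤ 1 - a),
    abs_of_nonneg (P_nonneg (by linarith) n), abs_of_nonneg (P_nonneg (by linarith) n),
    abs_of_pos (by positivity : (0:ℝ) < ((n+2).factorial : ℝ) * (n+1).factorial)]
  rw [div_le_div_iff₀ (by positivity) (by positivity)]
  have hb1 : P n (1-a) ≤ n.factorial := by
    calc P n (1-a) ≤ P n 1 := P_mono (by linarith) (by linarith) n
      _ = n.factorial := P_one n
  have hb2 : P n (2-a) ≤ (n+1).factorial := by
    calc P n (2-a) ≤ P n 2 := P_mono (by linarith) (by linarith) n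
      _ = (n+1).factorial := P_two n
  have hf2 : ((n+2).factorial : ℝ) = (n+2) * (n+1) * n.factorial := by
    rw [Nat.factorial_succ, Nat.factorial_succ]; push_cast; ring
  have hf1 : ((n+1).factorial : ℝ) = (n+1) * n.factorial := by
    rw [Nat.factorial_succ]; push_cast; ring
  have hP1 : 0 ≤ P n (1-a) := P_nonneg (by linarith) n
  have hP2 : 0 ≤ P n (2-a) := P_nonneg (by linarith) n
  have hfn : (0:ℝ) < n.factorial := by exact_mod_cast n.factorial_pos
  have key1 : P n (1-a) * P n (2-a) ≤ (n.factorial : ℝ) * (n+1).factorial :=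
    mul_le_mul hb1 hb2 hP2 (by positivity)
  have h1a' : (0:ℝ) ≤ 1 - a := by linarith
  have hmul := mul_le_mul_of_nonneg_left key1
    (show (0:ℝ) ≤ a * (1-a) * (((n:ℝ)+1) * ((n:ℝ)+2)) by positivity)
  rw [hf1] at hmul
  rw [hf2, hf1]
  nlinarith [hmul]

/-- partial sums of telescoping series -/
lemma telescope (N : ℕ) : ∑ n ∈ Finset.range N, (1:ℝ) / ((n+1) * (n+2)) = 1 - 1/(N+1) := by
  induction N with
  | zero => simp
  | succ N ih =>
      rw [Finset.sum_range_succ, ih]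
      have h1 : ((N:ℝ)+1) ≠ 0 := by positivity
      have h2 : ((N:ℝ)+2) ≠ 0 := by positivity
      field_simp
      push_cast; ring

lemma F1_lower (a t : ℝ) (ha : 0 < a) (ha1 : a ≤ 1) (ht0 : 0 ≤ t) (ht1 : t < 1) :
    3/4 ≤ ∑' n, c 1 a n * t ^ n := by
  have hsum : Summable (fun n => c 1 a n * t ^ n) :=
    summable_terms 1 a t ha.le ha1 le_rfl ht0 ht1
  rw [Summable.tsum_eq_zero_add hsum]
  have hc0 : c 1 a 0 * t ^ 0 = 1 := by simp [c_zero]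
  rw [hc0]
  have hsum' : Summable (fun n => c 1 a (n+1) * t ^ (n+1)) :=
    (_root_.summable_nat_add_iff 1).mpr hsum
  have habs : |∑' n, c 1 a (n+1) * t ^ (n+1)| ≤ ∑' n, |c 1 a (n+1) * t ^ (n+1)| := by
    have h := norm_tsum_le_tsum_norm (f := fun n => c 1 a (n+1) * t ^ (n+1)) hsum'.abs
    simp only [Real.norm_eq_abs] at h
    exact h
  have hbound : ∑' n, |c 1 a (n+1) * t ^ (n+1)| ≤ 1/4 := by
    have haa : a * (1-a) ≤ 1/4 := by nlinarith [sq_nonneg (a - 1/2)]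
    apply Real.tsum_le_of_sum_range_le (fun n => abs_nonneg _)
    intro N
    calc ∑ n ∈ Finset.range N, |c 1 a (n+1) * t ^ (n+1)|
        ≤ ∑ n ∈ Finset.range N, (1:ℝ)/4 * (1 / ((n+1) * (n+2))) := by
          apply Finset.sum_le_sum
          intro n _
          rw [abs_mul, abs_pow, abs_of_nonneg ht0]
          calc |c 1 a (n+1)| * t ^ (n+1) ≤ |c 1 a (n+1)| * 1 := by
                apply mul_le_mul_of_nonneg_left _ (abs_nonneg _)
                exact pow_le_one₀ ht0 ht1.le
            _ = |c 1 a (n+1)| := mul_one _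
            _ ≤ a * (1-a) / ((n+1) * (n+2)) := abs_c_one_le a ha.le ha1 n
            _ ≤ 1/4 * (1 / ((n+1) * (n+2))) := by
                rw [div_eq_mul_one_div]
                apply mul_le_mul_of_nonneg_right haa (by positivity)
      _ = 1/4 * (1 - 1/(N+1)) := by rw [← Finset.mul_sum, telescope]
      _ ≤ 1/4 := by
          have : (0:ℝ) < (N:ℝ)+1 := by positivity
          have : (0:ℝ) ≤ 1/((N:ℝ)+1) := by positivity
          linarith
  have : -(1/4 : ℝ) ≤ ∑' n, c 1 a (n+1) * t ^ (n+1) := by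
    have := neg_abs_le (∑' n, c 1 a (n+1) * t ^ (n+1))
    linarith
  linarith

end StmtNine

open StmtNine
theorem stmt_9 (α : ℝ) (hα : α ∈ Set.Ioc 0 2) (k : ℕ) (hk : 1 ≤ k)
    (t : ℝ) (ht : t ∈ Set.Ico (0 : ℝ) 1) :
    gaussHF (-α / 2) ((k : ℝ) - α / 2) ((k : ℝ) + 1) t /
      gaussHF (-α / 2) (1 - α / 2) 2 t ≤ 1 := by
  obtain ⟨hα0, hα2⟩ := hα
  obtain ⟨ht0, ht1⟩ := ht
  set a := α / 2 with ha_def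
  have ha : 0 < a := by positivity
  have ha1 : a ≤ 1 := by simp [ha_def]; linarith
  have hx : (1:ℝ) ≤ (k:ℝ) := by exact_mod_cast hk
  have hFk : gaussHF (-α/2) ((k:ℝ) - α/2) ((k:ℝ)+1) t = ∑' n, c (k:ℝ) a n * t ^ n := by
    have : -α/2 = -a := by rw [ha_def]; ring
    rw [this]; rfl
  have hF1 : gaussHF (-α/2) (1 - α/2) 2 t = ∑' n, c 1 a n * t ^ n := by
    have h1 : -α/2 = -a := by rw [ha_def]; ring
    have h2 : 1 - α/2 = 1 - a := by rw [ha_def]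
    rw [h1, h2, show (2:ℝ) = 1 + 1 by norm_num]; rfl
  rw [hFk, hF1]
  have hsumk : Summable (fun n => c (k:ℝ) a n * t ^ n) :=
    summable_terms (k:ℝ) a t ha.le ha1 hx ht0 ht1
  have hsum1 : Summable (fun n => c 1 a n * t ^ n) :=
    summable_terms 1 a t ha.le ha1 le_rfl ht0 ht1
  have hle : ∑' n, c (k:ℝ) a n * t ^ n ≤ ∑' n, c 1 a n * t ^ n := by
    apply Summable.tsum_le_tsum _ hsumk hsum1
    intro n
    apply mul_le_mul_of_nonneg_right (c_le (k:ℝ) a ha ha1 hx n) (by positivity)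
  have hpos : 0 < ∑' n, c 1 a n * t ^ n := by
    have := F1_lower a t ha ha1 ht0 ht1
    linarith
  rw [div_le_one hpos]
  exact hle
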